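/- Identification of the marginal counterfactual mean under control over the entire trial population (control-arm part of Theorem 2): under assumptions (P-0-all), (I-0-all) and (C-0-all), one has 𝔼[Y⁰] = Σ_{(w,e): 𝒫(W=w,E=e)>0} μ_all(0,w,e) · p(w,e). -/

import Mathlib

open MeasureTheory Finset

/-- Conditional expectation given an event: `𝔼[X | B] := 𝔼[X · 1_B] / 𝒫(B)`. -/
noncomputable def condMean {Ω : Type*} [MeasurableSpace Ω] (P : Measure Ω)
    (X : Ω → ℝ) (B : Set Ω) : ℝ :=
  (∫ ω, B.indicator X ω ∂P) / (P B).toReal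

/-- Identification of the marginal counterfactual mean under control over the entire trial
population (control-arm part of Theorem 2): under (P-0-all), (I-0-all) and (C-0-all),
`𝔼[Y⁰] = Σ_{(w,e) : 𝒫(W=w,E=e)>0} μ_all(0,w,e) · p(w,e)`. -/
theorem marginal_mean_control_identification
    {Ω : Type*} [MeasurableSpace Ω] (P : Measure Ω) [IsProbabilityMeasure P]
    {𝓦 ℰ : Type*} [Fintype 𝓦] [Fintype ℰ] [Nonempty 𝓦] [Nonempty ℰ]
    [MeasurableSpace 𝓦] [MeasurableSingletonClass 𝓦]
    [MeasurableSpace ℰ] [MeasurableSingletonClass ℰ]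
    (W : Ω → 𝓦) (E : Ω → ℰ) (V : Ω → Fin 2) {K : ℕ} (A : Ω → Fin (K + 1))
    (k : Fin (K + 1)) (Y Yk Y0 : Ω → ℝ)
    (hW : Measurable W) (hE : Measurable E) (hV : Measurable V) (hA : Measurable A)
    (hY : Integrable Y P) (hYk : Integrable Yk P) (hY0 : Integrable Y0 P)
    -- (P-0-all) positivity of the shared control arm among all units
    (hP0all : ∀ (w : 𝓦) (e : ℰ), 0 < P {ω | W ω = w ∧ E ω = e} →
      0 < P {ω | A ω = 0 ∧ W ω = w ∧ E ω = e})
    -- (I-0-all) weak A-ignorability for arm 0 among all units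
    (hI0all : ∀ (w : 𝓦) (e : ℰ), 0 < P {ω | A ω = 0 ∧ W ω = w ∧ E ω = e} →
      condMean P Y0 {ω | W ω = w ∧ E ω = e} =
        condMean P Y0 {ω | A ω = 0 ∧ W ω = w ∧ E ω = e})
    -- (C-0-all) consistency in mean for arm 0 among all units
    (hC0all : ∀ (w : 𝓦) (e : ℰ), 0 < P {ω | A ω = 0 ∧ W ω = w ∧ E ω = e} →
      condMean P Y0 {ω | A ω = 0 ∧ W ω = w ∧ E ω = e} =
        condMean P Y {ω | A ω = 0 ∧ W ω = w ∧ E ω = e})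
    :
    ∫ ω, Y0 ω ∂P =
      ∑ w : 𝓦, ∑ e : ℰ,
        if 0 < P {ω | W ω = w ∧ E ω = e} then
          condMean P Y {ω | A ω = 0 ∧ W ω = w ∧ E ω = e} *
            (P {ω | W ω = w ∧ E ω = e}).toReal
        else 0 := by
  classical
  have hmeas : ∀ (w : 𝓦) (e : ℰ), MeasurableSet {ω | W ω = w ∧ E ω = e} := by
    intro w e
    have h : {ω | W ω = w ∧ E ω = e} = W ⁻¹' {w} ∩ E ⁻¹' {e} := by
      ext ω; exact Iff.rfl
    rw [h]
    exact (hW (measurableSet_singleton w)).inter (hE (measurableSet_singleton e))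
  have hpt : ∀ ω, Y0 ω = ∑ w : 𝓦, ∑ e : ℰ,
      Set.indicator {ω | W ω = w ∧ E ω = e} Y0 ω := by
    intro ω
    simp only [Set.indicator_apply, Set.mem_setOf_eq, ite_and]
    rw [Finset.sum_eq_single (W ω)]
    · rw [Finset.sum_eq_single (E ω)]
      · simp
      · intro b _ hb; simp [Ne.symm hb]
      · simp
    · intro b _ hb
      rw [Finset.sum_eq_zero]
      intro e _
      simp [Ne.symm hb]
    · simp
  have hint : ∫ ω, Y0 ω ∂P = ∑ w : 𝓦, ∑ e : ℰ,
      ∫ ω, Set.indicator {ω | W ω = w ∧ E ω = e} Y0 ω ∂P := by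
    calc ∫ ω, Y0 ω ∂P
        = ∫ ω, ∑ w : 𝓦, ∑ e : ℰ, Set.indicator {ω | W ω = w ∧ E ω = e} Y0 ω ∂P := by
          exact integral_congr_ae (Filter.Eventually.of_forall hpt)
      _ = ∑ w : 𝓦, ∑ e : ℰ, ∫ ω, Set.indicator {ω | W ω = w ∧ E ω = e} Y0 ω ∂P := by
          rw [integral_finset_sum]
          · refine Finset.sum_congr rfl (fun w _ => ?_)
            rw [integral_finset_sum]
            intro e _
            exact hY0.indicator (hmeas w e)
          · intro w _
            exact integrable_finset_sum _ (fun e _ => hY0.indicator (hmeas w e))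
  rw [hint]
  refine Finset.sum_congr rfl (fun w _ => Finset.sum_congr rfl (fun e _ => ?_))
  by_cases hpos : 0 < P {ω | W ω = w ∧ E ω = e}
  · rw [if_pos hpos]
    have hpos0 := hP0all w e hpos
    have h1 : condMean P Y0 {ω | W ω = w ∧ E ω = e} =
        condMean P Y {ω | A ω = 0 ∧ W ω = w ∧ E ω = e} :=
      (hI0all w e hpos0).trans (hC0all w e hpos0)
    have hne : ((P {ω | W ω = w ∧ E ω = e}).toReal) ≠ 0 := by
      refine ne_of_gt (ENNReal.toReal_pos (ne_of_gt hpos) (measure_ne_top P _))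
    rw [← h1]
    unfold condMean
    rw [div_mul_cancel₀ _ hne]
  · rw [if_neg hpos]
    have h0 : P {ω | W ω = w ∧ E ω = e} = 0 := by
      by_contra h; exact hpos (lt_of_le_of_ne zero_le (Ne.symm h))
    rw [integral_indicator (hmeas w e), Measure.restrict_eq_zero.mpr h0, integral_zero_measure]
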